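/- Let n ≥ 2, κ, ρ ∈ ℝ, Q ≥ 1 and 0 < β < α, with α < π/√ρ if ρ > 0. Let V : [β, α] → ℝ be a differentiable function taking values in the interior of the range of V_κ, and set r(t) = V_κ⁻¹(V(t)). If V′(t) ≥ I_κ(V(t))^{n/(n−1)} / (Q·ω_{n−1}^{1/(n−1)}·sin_ρ(t)) for every t ∈ [β, α], then tan_κ(r(α)/2) ≥ tan_κ(r(β)/2)·(tan_ρ(α/2)/tan_ρ(β/2))^{1/Q}. -/

import Mathlib

open Real MeasureTheory Filter Asymptotics

/-- Inverse hyperbolic tangent. -/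
noncomputable def artanh (y : ℝ) : ℝ := Real.log ((1 + y) / (1 - y)) / 2

/-- The generalized sine function `sin_κ`. -/
noncomputable def sinK (κ t : ℝ) : ℝ :=
  if 0 < κ then Real.sin (Real.sqrt κ * t) / Real.sqrt κ
  else if κ < 0 then Real.sinh (Real.sqrt (-κ) * t) / Real.sqrt (-κ)
  else t

/-- The generalized cosine function `cos_κ = sin_κ'`. -/
noncomputable def cosK (κ t : ℝ) : ℝ :=
  if 0 < κ then Real.cos (Real.sqrt κ * t)
  else if κ < 0 then Real.cosh (Real.sqrt (-κ) * t)
  else 1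

/-- The generalized tangent function `tan_κ`. -/
noncomputable def tanK (κ t : ℝ) : ℝ := sinK κ t / cosK κ t

/-- The inverse function `arctan_κ` of `tan_κ`. -/
noncomputable def arctanK (κ x : ℝ) : ℝ :=
  if 0 < κ then Real.arctan (Real.sqrt κ * x) / Real.sqrt κ
  else if κ < 0 then _root_.artanh (Real.sqrt (-κ) * x) / Real.sqrt (-κ)
  else x

/-- `ω_{n-1}`, the (n-1)-volume of the unit sphere of ℝⁿ, i.e. `n` times the
volume of the unit ball. -/
noncomputable def omegaS (n : ℕ) : ℝ :=
  n * (volume (Metric.ball (0 : EuclideanSpace ℝ (Fin n)) 1)).toReal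

/-- `A_κ(t)`: the volume of a geodesic sphere of radius `t` in the model space. -/
noncomputable def AK (n : ℕ) (κ t : ℝ) : ℝ := omegaS n * sinK κ t ^ (n - 1)

/-- `V_κ(t)`: the volume of a geodesic ball of radius `t` in the model space. -/
noncomputable def VK (n : ℕ) (κ t : ℝ) : ℝ := omegaS n * ∫ s in (0:ℝ)..t, sinK κ s ^ (n - 1)

/-- The natural domain of `V_κ`: `[0, π/√κ)` when `κ > 0` and `[0, ∞)` otherwise. -/
noncomputable def domK (κ : ℝ) : Set ℝ :=
  if 0 < κ then Set.Ico 0 (Real.pi / Real.sqrt κ) else Set.Ici 0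

/-- The range of `V_κ` (on its natural domain). -/
noncomputable def rangeVK (n : ℕ) (κ : ℝ) : Set ℝ := VK n κ '' domK κ

/-- The inverse of `V_κ` on its natural domain. -/
noncomputable def VKinv (n : ℕ) (κ v : ℝ) : ℝ := sInf {t : ℝ | t ∈ domK κ ∧ VK n κ t = v}

/-- The isoperimetric profile `I_κ = A_κ ∘ V_κ⁻¹` of the model space. -/
noncomputable def IK (n : ℕ) (κ v : ℝ) : ℝ := AK n κ (VKinv n κ v)
lemma sinK_pos {κ t : ℝ} (ht : 0 < t) (ht' : 0 < κ → t < Real.pi / Real.sqrt κ) :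
    0 < sinK κ t := by
  rcases lt_trichotomy κ 0 with hκ | hκ | hκ
  · simp only [sinK, if_neg (not_lt.2 hκ.le), if_pos hκ]
    have h0 : 0 < Real.sqrt (-κ) := Real.sqrt_pos.2 (by linarith)
    exact div_pos (Real.sinh_pos_iff.2 (by positivity)) h0
  · subst hκ; simpa [sinK] using ht
  · simp only [sinK, if_pos hκ]
    have h0 : 0 < Real.sqrt κ := Real.sqrt_pos.2 hκ
    have h1 : Real.sqrt κ * t < Real.pi := by
      have := ht' hκ
      calc Real.sqrt κ * t < Real.sqrt κ * (Real.pi / Real.sqrt κ) := by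
            exact mul_lt_mul_of_pos_left this h0
        _ = Real.pi := by field_simp
    exact div_pos (Real.sin_pos_of_pos_of_lt_pi (by positivity) h1) h0

lemma sinK_half_pos {κ t : ℝ} (ht : 0 < t) (ht' : 0 < κ → t < Real.pi / Real.sqrt κ) :
    0 < sinK κ (t / 2) :=
  sinK_pos (by positivity) (fun hκ => by
    have := ht' hκ
    have h0 : 0 < Real.pi / Real.sqrt κ := lt_trans ht this
    linarith)

lemma cosK_half_pos {κ t : ℝ} (ht : 0 < t) (ht' : 0 < κ → t < Real.pi / Real.sqrt κ) :
    0 < cosK κ (t / 2) := by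
  rcases lt_trichotomy κ 0 with hκ | hκ | hκ
  · simp only [cosK, if_neg (not_lt.2 hκ.le), if_pos hκ]; exact Real.cosh_pos _
  · subst hκ; simp [cosK]
  · simp only [cosK, if_pos hκ]
    have h0 : 0 < Real.sqrt κ := Real.sqrt_pos.2 hκ
    apply Real.cos_pos_of_mem_Ioo
    constructor
    · have : (0:ℝ) < Real.pi / 2 := by positivity
      nlinarith [Real.pi_pos]
    · have h1 : Real.sqrt κ * t < Real.pi := by
        have := ht' hκ
        calc Real.sqrt κ * t < Real.sqrt κ * (Real.pi / Real.sqrt κ) :=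
              mul_lt_mul_of_pos_left this h0
          _ = Real.pi := by field_simp
      have : Real.sqrt κ * (t / 2) = Real.sqrt κ * t / 2 := by ring
      rw [this]; linarith

lemma tanK_half_pos {κ t : ℝ} (ht : 0 < t) (ht' : 0 < κ → t < Real.pi / Real.sqrt κ) :
    0 < tanK κ (t / 2) :=
  div_pos (sinK_half_pos ht ht') (cosK_half_pos ht ht')

lemma sinK_double (κ x : ℝ) : sinK κ x = 2 * sinK κ (x / 2) * cosK κ (x / 2) := by
  rcases lt_trichotomy κ 0 with hκ | hκ | hκ
  · simp only [sinK, cosK, if_neg (not_lt.2 hκ.le), if_pos hκ]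
    have h2 : Real.sqrt (-κ) * x = 2 * (Real.sqrt (-κ) * (x / 2)) := by ring
    rw [h2, Real.sinh_two_mul]; ring
  · subst hκ; simp [sinK, cosK]; ring
  · simp only [sinK, cosK, if_pos hκ]
    have h2 : Real.sqrt κ * x = 2 * (Real.sqrt κ * (x / 2)) := by ring
    rw [h2, Real.sin_two_mul]; ring

lemma cosK_sq_add (κ x : ℝ) : cosK κ x ^ 2 + κ * sinK κ x ^ 2 = 1 := by
  rcases lt_trichotomy κ 0 with hκ | hκ | hκ
  · simp only [sinK, cosK, if_neg (not_lt.2 hκ.le), if_pos hκ]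
    have h0 : (0:ℝ) < -κ := by linarith
    have hs : Real.sqrt (-κ) ^ 2 = -κ := Real.sq_sqrt h0.le
    have := Real.cosh_sq_sub_sinh_sq (Real.sqrt (-κ) * x)
    have hne : Real.sqrt (-κ) ≠ 0 := by positivity
    field_simp
    linear_combination (Real.cosh (Real.sqrt (-κ) * x) ^ 2 - 1) * hs + (-κ) * this
  · subst hκ; simp [sinK, cosK]
  · simp only [sinK, cosK, if_pos hκ]
    have hs : Real.sqrt κ ^ 2 = κ := Real.sq_sqrt hκ.le
    have := Real.sin_sq_add_cos_sq (Real.sqrt κ * x)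
    have hne : Real.sqrt κ ≠ 0 := by positivity
    field_simp
    linear_combination (Real.cos (Real.sqrt κ * x) ^ 2 - 1) * hs + κ * this

lemma hasDerivAt_sinK (κ x : ℝ) : HasDerivAt (sinK κ) (cosK κ x) x := by
  rcases lt_trichotomy κ 0 with hκ | hκ | hκ
  · have hfun : sinK κ = fun t => Real.sinh (Real.sqrt (-κ) * t) / Real.sqrt (-κ) := by
      funext t; simp [sinK, if_neg (not_lt.2 hκ.le), if_pos hκ]
    have hne : Real.sqrt (-κ) ≠ 0 := by
      have : (0:ℝ) < -κ := by linarith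
      positivity
    rw [hfun]
    have h1 : HasDerivAt (fun t : ℝ => Real.sqrt (-κ) * t) (Real.sqrt (-κ)) x := by
      simpa using (hasDerivAt_id x).const_mul (Real.sqrt (-κ))
    have h2 := (Real.hasDerivAt_sinh (Real.sqrt (-κ) * x)).comp x h1
    have h3 := h2.div_const (Real.sqrt (-κ))
    refine h3.congr_deriv ?_
    symm
    simp [cosK, if_neg (not_lt.2 hκ.le), if_pos hκ]
    field_simp
  · subst hκ
    have hfun : sinK 0 = fun t : ℝ => t := by funext t; simp [sinK]
    have hc : cosK 0 x = 1 := by simp [cosK]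
    rw [hfun, hc]; exact hasDerivAt_id x
  · have hfun : sinK κ = fun t => Real.sin (Real.sqrt κ * t) / Real.sqrt κ := by
      funext t; simp [sinK, if_pos hκ]
    have hne : Real.sqrt κ ≠ 0 := by positivity
    rw [hfun]
    have h1 : HasDerivAt (fun t : ℝ => Real.sqrt κ * t) (Real.sqrt κ) x := by
      simpa using (hasDerivAt_id x).const_mul (Real.sqrt κ)
    have h2 := (Real.hasDerivAt_sin (Real.sqrt κ * x)).comp x h1
    have h3 := h2.div_const (Real.sqrt κ)
    refine h3.congr_deriv ?_
    symm
    simp [cosK, if_pos hκ]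
    field_simp

lemma hasDerivAt_cosK (κ x : ℝ) : HasDerivAt (cosK κ) (-κ * sinK κ x) x := by
  rcases lt_trichotomy κ 0 with hκ | hκ | hκ
  · have hfun : cosK κ = fun t => Real.cosh (Real.sqrt (-κ) * t) := by
      funext t; simp [cosK, if_neg (not_lt.2 hκ.le), if_pos hκ]
    have h0 : (0:ℝ) < -κ := by linarith
    have hs : Real.sqrt (-κ) ^ 2 = -κ := Real.sq_sqrt h0.le
    rw [hfun]
    have h1 : HasDerivAt (fun t : ℝ => Real.sqrt (-κ) * t) (Real.sqrt (-κ)) x := by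
      simpa using (hasDerivAt_id x).const_mul (Real.sqrt (-κ))
    have h2 := (Real.hasDerivAt_cosh (Real.sqrt (-κ) * x)).comp x h1
    refine h2.congr_deriv ?_
    symm
    have hne : Real.sqrt (-κ) ≠ 0 := by positivity
    have hss : Real.sqrt (-κ) * Real.sqrt (-κ) = -κ := by nlinarith [hs]
    simp only [sinK, if_neg (not_lt.2 hκ.le), if_pos hκ]
    field_simp
    linear_combination (-Real.sinh (Real.sqrt (-κ) * x)) * hs
  · subst hκ
    have hfun : cosK 0 = fun _ : ℝ => (1:ℝ) := by funext t; simp [cosK]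
    rw [hfun]
    simpa using (hasDerivAt_const x (1:ℝ))
  · have hfun : cosK κ = fun t => Real.cos (Real.sqrt κ * t) := by
      funext t; simp [cosK, if_pos hκ]
    have hs : Real.sqrt κ ^ 2 = κ := Real.sq_sqrt hκ.le
    rw [hfun]
    have h1 : HasDerivAt (fun t : ℝ => Real.sqrt κ * t) (Real.sqrt κ) x := by
      simpa using (hasDerivAt_id x).const_mul (Real.sqrt κ)
    have h2 := (Real.hasDerivAt_cos (Real.sqrt κ * x)).comp x h1
    refine h2.congr_deriv ?_
    symm
    have hne : Real.sqrt κ ≠ 0 := by positivity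
    have hss : Real.sqrt κ * Real.sqrt κ = κ := by nlinarith [hs]
    simp only [sinK, if_pos hκ]
    field_simp
    linear_combination (Real.sin (Real.sqrt κ * x)) * hs

lemma continuous_sinK (κ : ℝ) : Continuous (sinK κ) := by
  rcases lt_trichotomy κ 0 with hκ | hκ | hκ
  · have hfun : sinK κ = fun t => Real.sinh (Real.sqrt (-κ) * t) / Real.sqrt (-κ) := by
      funext t; simp [sinK, if_neg (not_lt.2 hκ.le), if_pos hκ]
    rw [hfun]; exact (Real.continuous_sinh.comp (continuous_const.mul continuous_id)).div_const _
  · subst hκ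
    have hfun : sinK 0 = fun t : ℝ => t := by funext t; simp [sinK]
    rw [hfun]; exact continuous_id
  · have hfun : sinK κ = fun t => Real.sin (Real.sqrt κ * t) / Real.sqrt κ := by
      funext t; simp [sinK, if_pos hκ]
    rw [hfun]; exact (Real.continuous_sin.comp (continuous_const.mul continuous_id)).div_const _

lemma hasDerivAt_logTanKHalf {κ x : ℝ} (hx0 : 0 < x) (hxκ : 0 < κ → x < Real.pi / Real.sqrt κ) :
    HasDerivAt (fun y => Real.log (tanK κ (y / 2))) (sinK κ x)⁻¹ x := by
  set s := sinK κ (x / 2) with hs_def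
  set c := cosK κ (x / 2) with hc_def
  have hs : 0 < s := sinK_half_pos hx0 hxκ
  have hc : 0 < c := cosK_half_pos hx0 hxκ
  have hhalf : HasDerivAt (fun y : ℝ => y / 2) ((1:ℝ)/2) x := by
    simpa using (hasDerivAt_id x).div_const 2
  have hS : HasDerivAt (fun y : ℝ => sinK κ (y / 2)) (c * (1/2)) x :=
    ((hasDerivAt_sinK κ (x / 2)).comp x hhalf :)
  have hC : HasDerivAt (fun y : ℝ => cosK κ (y / 2)) (-κ * s * (1/2)) x :=
    ((hasDerivAt_cosK κ (x / 2)).comp x hhalf :)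
  have hq : HasDerivAt (fun y : ℝ => sinK κ (y / 2) / cosK κ (y / 2))
      ((c * (1/2) * c - s * (-κ * s * (1/2))) / c ^ 2) x := hS.div hC hc.ne'
  have htan : 0 < s / c := div_pos hs hc
  have hlog := (Real.hasDerivAt_log htan.ne').comp x hq
  have heq : (fun y : ℝ => Real.log (tanK κ (y / 2)))
      = (fun y : ℝ => Real.log (sinK κ (y / 2) / cosK κ (y / 2))) := by
    funext y; rw [tanK]
  rw [heq]
  refine hlog.congr_deriv ?_
  symm
  have hid : c ^ 2 + κ * s ^ 2 = 1 := cosK_sq_add κ (x / 2)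
  have hdouble : sinK κ x = 2 * s * c := sinK_double κ x
  rw [hdouble]
  field_simp
  ring_nf
  linear_combination (-1) * hid

lemma omegaS_pos {n : ℕ} (hn : 1 ≤ n) : 0 < omegaS n := by
  unfold omegaS
  have h1 : (0:ℝ) < (n:ℝ) := by exact_mod_cast hn
  have h2 : 0 < (volume (Metric.ball (0 : EuclideanSpace ℝ (Fin n)) 1)).toReal :=
    ENNReal.toReal_pos (Metric.measure_ball_pos volume _ one_pos).ne' measure_ball_lt_top.ne
  positivity

lemma sinK_zero (κ : ℝ) : sinK κ 0 = 0 := by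
  unfold sinK; split_ifs <;> simp

lemma mem_domK {κ x : ℝ} : x ∈ domK κ ↔ 0 ≤ x ∧ (0 < κ → x < Real.pi / Real.sqrt κ) := by
  unfold domK; split_ifs with h
  · simp only [Set.mem_Ico]; exact ⟨fun ⟨a, b⟩ => ⟨a, fun _ => b⟩, fun ⟨a, b⟩ => ⟨a, b h⟩⟩
  · simp only [Set.mem_Ici]; exact ⟨fun a => ⟨a, fun hh => absurd hh h⟩, fun ⟨a, _⟩ => a⟩

lemma mem_interior_domK {κ x : ℝ} :
    x ∈ interior (domK κ) ↔ 0 < x ∧ (0 < κ → x < Real.pi / Real.sqrt κ) := by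
  unfold domK; split_ifs with h
  · rw [interior_Ico, Set.mem_Ioo]
    exact ⟨fun ⟨a, b⟩ => ⟨a, fun _ => b⟩, fun ⟨a, b⟩ => ⟨a, b h⟩⟩
  · rw [interior_Ici, Set.mem_Ioi]
    exact ⟨fun a => ⟨a, fun hh => absurd hh h⟩, fun ⟨a, _⟩ => a⟩

lemma hasStrictDerivAt_VK (n : ℕ) (κ x : ℝ) : HasStrictDerivAt (VK n κ) (AK n κ x) x := by
  have h := (((continuous_sinK κ).pow (n-1)).integral_hasStrictDerivAt 0 x).const_mul (omegaS n)
  exact h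

lemma AK_pos {n : ℕ} (hn : 1 ≤ n) {κ x : ℝ} (hx : x ∈ interior (domK κ)) :
    0 < AK n κ x := by
  obtain ⟨hx0, hxκ⟩ := mem_interior_domK.1 hx
  exact mul_pos (omegaS_pos hn) (pow_pos (sinK_pos hx0 hxκ) _)

lemma VK_nonneg (n : ℕ) {κ s : ℝ} (hs : s ∈ domK κ) : 0 ≤ VK n κ s := by
  obtain ⟨hs0, hsup⟩ := mem_domK.1 hs
  apply mul_nonneg (by unfold omegaS; positivity)
  apply intervalIntegral.integral_nonneg hs0
  intro u hu
  rcases eq_or_lt_of_le hu.1 with h | h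
  · simp [← h, sinK_zero]
  · exact pow_nonneg (sinK_pos h (fun hκ => lt_of_le_of_lt hu.2 (hsup hκ))).le _

lemma VK_strictMonoOn (n : ℕ) (hn : 1 ≤ n) (κ : ℝ) : StrictMonoOn (VK n κ) (domK κ) := by
  have hconv : Convex ℝ (domK κ) := by
    unfold domK; split_ifs; exacts [convex_Ico _ _, convex_Ici _]
  apply strictMonoOn_of_deriv_pos hconv
  · exact fun x _ => ((hasStrictDerivAt_VK n κ x).hasDerivAt.continuousAt).continuousWithinAt
  · intro x hx
    rw [(hasStrictDerivAt_VK n κ x).hasDerivAt.deriv]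
    exact AK_pos hn hx

lemma VKinv_VK (n : ℕ) (hn : 1 ≤ n) {κ s : ℝ} (hs : s ∈ domK κ) :
    VKinv n κ (VK n κ s) = s := by
  unfold VKinv
  have h : {t : ℝ | t ∈ domK κ ∧ VK n κ t = VK n κ s} = {s} := by
    ext t
    simp only [Set.mem_setOf_eq, Set.mem_singleton_iff]
    constructor
    · rintro ⟨ht, hteq⟩; exact (VK_strictMonoOn n hn κ).injOn ht hs hteq
    · rintro rfl; exact ⟨hs, rfl⟩
  rw [h, csInf_singleton]

lemma VKinv_spec (n : ℕ) (hn : 1 ≤ n) {κ v : ℝ} (hv : v ∈ interior (rangeVK n κ)) :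
    VKinv n κ v ∈ interior (domK κ) ∧ VK n κ (VKinv n κ v) = v ∧
      HasDerivAt (VKinv n κ) (AK n κ (VKinv n κ v))⁻¹ v := by
  obtain ⟨s, hsdom, hVKs⟩ := interior_subset hv
  have hv_pos : 0 < v := by
    have hsub : rangeVK n κ ⊆ Set.Ici 0 := by
      rintro _ ⟨t, ht, rfl⟩; exact VK_nonneg n ht
    have h := interior_mono hsub hv
    rwa [interior_Ici, Set.mem_Ioi] at h
  have hs_ne : s ≠ 0 := by
    rintro rfl
    rw [show VK n κ 0 = 0 by unfold VK; simp] at hVKs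
    exact hv_pos.ne' hVKs.symm
  have hs_int : s ∈ interior (domK κ) := by
    rw [mem_interior_domK]
    rcases mem_domK.1 hsdom with ⟨h0, hlt⟩
    exact ⟨lt_of_le_of_ne h0 (Ne.symm hs_ne), hlt⟩
  have hApos : 0 < AK n κ s := AK_pos hn hs_int
  have hA : AK n κ s ≠ 0 := hApos.ne'
  have hf := hasStrictDerivAt_VK n κ s
  have hFeq := hf.hasStrictFDerivAt_equiv hA
  set g : ℝ → ℝ := hf.localInverse (VK n κ) (AK n κ s) s hA with hg
  have hginv : HasStrictDerivAt g (AK n κ s)⁻¹ (VK n κ s) := hf.to_localInverse hA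
  have hright : ∀ᶠ y in nhds (VK n κ s), VK n κ (g y) = y := hFeq.eventually_right_inverse
  have htend : Filter.Tendsto g (nhds (VK n κ s)) (nhds s) := hFeq.localInverse_tendsto
  have hmem_ev : ∀ᶠ y in nhds (VK n κ s), y ∈ interior (rangeVK n κ) := by
    rw [hVKs]; exact isOpen_interior.eventually_mem hv
  have hgdom : ∀ᶠ y in nhds (VK n κ s), g y ∈ interior (domK κ) :=
    htend.eventually (isOpen_interior.eventually_mem hs_int)
  have hEq : (VKinv n κ) =ᶠ[nhds v] g := by
    rw [← hVKs]
    filter_upwards [hright, hmem_ev, hgdom] with y h1 h2 h3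
    obtain ⟨u, hudom, huv⟩ := interior_subset h2
    have hgu : g y = u :=
      (VK_strictMonoOn n hn κ).injOn (interior_subset h3) hudom (by rw [h1, huv])
    rw [hgu, ← huv, VKinv_VK n hn hudom]
  have hVKinv_v : VKinv n κ v = s := by rw [← hVKs, VKinv_VK n hn hsdom]
  refine ⟨hVKinv_v ▸ hs_int, by rw [hVKinv_v, hVKs], ?_⟩
  rw [hVKinv_v]
  have hDg : HasDerivAt g (AK n κ s)⁻¹ v := by rw [← hVKs]; exact hginv.hasDerivAt
  exact (hEq.hasDerivAt_iff).2 hDg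


/-- Integrated form of the main quasiconformal differential inequality.
Let `n ≥ 2`, `Q ≥ 1`, `0 < β < α` (with `α < π/√ρ` if `ρ > 0`), and let
`V : [β,α] → ℝ` be differentiable with values in the interior of the range of
`V_κ`; set `r(t) = V_κ⁻¹(V(t))`.  If
`V'(t) ≥ I_κ(V(t))^{n/(n-1)} / (Q·ω_{n-1}^{1/(n-1)}·sin_ρ(t))` on `[β,α]`, then
`tan_κ(r(α)/2) ≥ tan_κ(r(β)/2)·(tan_ρ(α/2)/tan_ρ(β/2))^{1/Q}`. -/
theorem main_quasiconformal_inequality_integrated (n : ℕ) (hn : 2 ≤ n)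
    (κ ρ Q α β : ℝ) (hQ : 1 ≤ Q) (hβ : 0 < β) (hβα : β < α)
    (hα : 0 < ρ → α < Real.pi / Real.sqrt ρ)
    (V V' : ℝ → ℝ)
    (hV : ∀ t ∈ Set.Icc β α, HasDerivAt V (V' t) t)
    (hVmem : ∀ t ∈ Set.Icc β α, V t ∈ interior (rangeVK n κ))
    (hineq : ∀ t ∈ Set.Icc β α,
      IK n κ (V t) ^ ((n : ℝ) / ((n : ℝ) - 1)) /
        (Q * omegaS n ^ ((1 : ℝ) / ((n : ℝ) - 1)) * sinK ρ t) ≤ V' t) :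
    tanK κ (VKinv n κ (V β) / 2) *
        (tanK ρ (α / 2) / tanK ρ (β / 2)) ^ ((1 : ℝ) / Q)
      ≤ tanK κ (VKinv n κ (V α) / 2) := by
  have hn1 : 1 ≤ n := le_trans one_le_two hn
  have hQ0 : 0 < Q := lt_of_lt_of_le one_pos hQ
  have hmem : ∀ t ∈ Set.Icc β α, 0 < t ∧ (0 < ρ → t < Real.pi / Real.sqrt ρ) :=
    fun t ht => ⟨lt_of_lt_of_le hβ ht.1, fun hρ => lt_of_le_of_lt ht.2 (hα hρ)⟩
  set r : ℝ → ℝ := fun t => VKinv n κ (V t) with hrdef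
  have hspec : ∀ t ∈ Set.Icc β α, r t ∈ interior (domK κ) ∧ VK n κ (r t) = V t ∧
      HasDerivAt (VKinv n κ) (AK n κ (r t))⁻¹ (V t) := fun t ht =>
    VKinv_spec n hn1 (hVmem t ht)
  set G : ℝ → ℝ := fun t => Real.log (tanK κ (r t / 2)) - (1/Q) * Real.log (tanK ρ (t/2))
    with hGdef
  set G' : ℝ → ℝ := fun t =>
    (sinK κ (r t))⁻¹ * ((AK n κ (r t))⁻¹ * V' t) - (1/Q) * (sinK ρ t)⁻¹ with hG'def
  have hGderiv : ∀ t ∈ Set.Icc β α, HasDerivAt G (G' t) t := by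
    intro t ht
    obtain ⟨hint, hVKr, hDinv⟩ := hspec t ht
    obtain ⟨hr0, hrκ⟩ := mem_interior_domK.1 hint
    have hDr : HasDerivAt r ((AK n κ (r t))⁻¹ * V' t) t := hDinv.comp t (hV t ht)
    have h1 : HasDerivAt (fun u => Real.log (tanK κ (r u / 2)))
        ((sinK κ (r t))⁻¹ * ((AK n κ (r t))⁻¹ * V' t)) t :=
      (hasDerivAt_logTanKHalf hr0 hrκ).comp t hDr
    obtain ⟨ht0, htρ⟩ := hmem t ht
    have h2 : HasDerivAt (fun u => Real.log (tanK ρ (u / 2))) (sinK ρ t)⁻¹ t :=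
      hasDerivAt_logTanKHalf ht0 htρ
    exact h1.sub (h2.const_mul (1/Q))
  have hGnonneg : ∀ t ∈ Set.Icc β α, 0 ≤ G' t := by
    intro t ht
    obtain ⟨hint, hVKr, _⟩ := hspec t ht
    obtain ⟨hr0, hrκ⟩ := mem_interior_domK.1 hint
    obtain ⟨ht0, htρ⟩ := hmem t ht
    have hS : 0 < sinK κ (r t) := sinK_pos hr0 hrκ
    have ha : 0 < AK n κ (r t) := AK_pos hn1 hint
    have hsρ : 0 < sinK ρ t := sinK_pos ht0 htρ
    have hω : 0 < omegaS n := omegaS_pos hn1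
    have hωe : 0 < omegaS n ^ ((1:ℝ)/((n:ℝ)-1)) := Real.rpow_pos_of_pos hω _
    have hen : (0:ℝ) < (n:ℝ) - 1 := by
      have h2n : (2:ℝ) ≤ (n:ℝ) := by exact_mod_cast hn
      linarith
    have hIK : IK n κ (V t) = AK n κ (r t) := rfl
    have hpow : AK n κ (r t) ^ ((n:ℝ)/((n:ℝ)-1))
        = AK n κ (r t) * (omegaS n ^ ((1:ℝ)/((n:ℝ)-1)) * sinK κ (r t)) := by
      have hfrac : (n:ℝ)/((n:ℝ)-1) = 1 + 1/((n:ℝ)-1) := by field_simp; ring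
      rw [hfrac, Real.rpow_add ha, Real.rpow_one]
      congr 1
      have hAKdef : AK n κ (r t) = omegaS n * sinK κ (r t) ^ (n-1) := rfl
      rw [hAKdef, Real.mul_rpow hω.le (pow_nonneg hS.le _)]
      congr 1
      rw [← Real.rpow_natCast (sinK κ (r t)) (n-1), ← Real.rpow_mul hS.le]
      rw [show ((n-1 : ℕ):ℝ) * (1/((n:ℝ)-1)) = 1 by
        rw [Nat.cast_sub hn1]; push_cast; field_simp]
      exact Real.rpow_one _
    have hineq' := hineq t ht
    rw [hIK, hpow] at hineq'
    have hV'lb : AK n κ (r t) * sinK κ (r t) / (Q * sinK ρ t) ≤ V' t := by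
      have heq : AK n κ (r t) * (omegaS n ^ ((1:ℝ)/((n:ℝ)-1)) * sinK κ (r t)) /
          (Q * omegaS n ^ ((1:ℝ)/((n:ℝ)-1)) * sinK ρ t)
          = AK n κ (r t) * sinK κ (r t) / (Q * sinK ρ t) := by
        field_simp
      rwa [heq] at hineq'
    have key : (1/Q) * (sinK ρ t)⁻¹ ≤ (sinK κ (r t))⁻¹ * ((AK n κ (r t))⁻¹ * V' t) := by
      rw [show (1/Q) * (sinK ρ t)⁻¹ = (sinK κ (r t))⁻¹ * ((AK n κ (r t))⁻¹ *
          (AK n κ (r t) * sinK κ (r t) / (Q * sinK ρ t))) by field_simp]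
      gcongr
    exact sub_nonneg.2 key
  have hmono : MonotoneOn G (Set.Icc β α) := by
    apply monotoneOn_of_deriv_nonneg (convex_Icc β α)
    · exact fun t ht => ((hGderiv t ht).continuousAt).continuousWithinAt
    · intro t ht
      rw [interior_Icc] at ht
      exact ((hGderiv t (Set.Ioo_subset_Icc_self ht)).differentiableAt).differentiableWithinAt
    · intro t ht
      rw [interior_Icc] at ht
      rw [(hGderiv t (Set.Ioo_subset_Icc_self ht)).deriv]
      exact hGnonneg t (Set.Ioo_subset_Icc_self ht)
  have hβmem : β ∈ Set.Icc β α := ⟨le_refl _, hβα.le⟩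
  have hαmem : α ∈ Set.Icc β α := ⟨hβα.le, le_refl _⟩
  have hGle : G β ≤ G α := hmono hβmem hαmem hβα.le
  obtain ⟨hintβ, -, -⟩ := hspec β hβmem
  obtain ⟨hintα, -, -⟩ := hspec α hαmem
  obtain ⟨hrβ0, hrβκ⟩ := mem_interior_domK.1 hintβ
  obtain ⟨hrα0, hrακ⟩ := mem_interior_domK.1 hintα
  have hTβ : 0 < tanK κ (r β / 2) := tanK_half_pos hrβ0 hrβκ
  have hTα : 0 < tanK κ (r α / 2) := tanK_half_pos hrα0 hrακ
  have htβ : 0 < tanK ρ (β / 2) := tanK_half_pos hβ (fun hρ => lt_trans hβα (hα hρ))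
  have htα : 0 < tanK ρ (α / 2) := tanK_half_pos (lt_trans hβ hβα) hα
  have hrpow : (tanK ρ (α/2) / tanK ρ (β/2)) ^ ((1:ℝ)/Q)
      = Real.exp ((1/Q) * Real.log (tanK ρ (α/2)) - (1/Q) * Real.log (tanK ρ (β/2))) := by
    rw [Real.rpow_def_of_pos (div_pos htα htβ), Real.log_div htα.ne' htβ.ne']
    congr 1
    ring
  have hGβ : G β = Real.log (tanK κ (r β / 2)) - (1/Q) * Real.log (tanK ρ (β/2)) := rfl
  have hGα : G α = Real.log (tanK κ (r α / 2)) - (1/Q) * Real.log (tanK ρ (α/2)) := rfl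
  rw [hGβ, hGα] at hGle
  show tanK κ (r β / 2) * (tanK ρ (α / 2) / tanK ρ (β / 2)) ^ ((1:ℝ)/Q)
      ≤ tanK κ (r α / 2)
  calc tanK κ (r β / 2) * (tanK ρ (α / 2) / tanK ρ (β / 2)) ^ ((1:ℝ)/Q)
      = Real.exp (Real.log (tanK κ (r β / 2)) +
          ((1/Q) * Real.log (tanK ρ (α/2)) - (1/Q) * Real.log (tanK ρ (β/2)))) := by
        rw [hrpow, Real.exp_add, Real.exp_log hTβ]
    _ ≤ Real.exp (Real.log (tanK κ (r α / 2))) := by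
        apply Real.exp_le_exp.2
        linarith
    _ = tanK κ (r α / 2) := Real.exp_log hTα
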